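/- The iterated conditional (B|A)|(B|A) is constant and equal to 1 (validating Boethius' Thesis in Approach 2): let μ be a probability measure on a measurable space Ω, A, B measurable with μ(A) > 0, x = P(B|A) with x ≠ 0, and f = 1_{A∩B} + x·1_{Aᶜ}. If a real number m satisfies ∫ (f + m·(1 − f)) dμ = m, then m = 1, and in that case the random quantity f + m·(1 − f) is identically equal to 1 on Ω. -/

import Mathlib

open MeasureTheory

/-- Conditional probability `P(E|H) = μ(E ∩ H) / μ(H)` as a real number. -/
noncomputable def condP {Ω : Type*} [MeasurableSpace Ω] (μ : Measure Ω) (E H : Set Ω) : ℝ :=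
  (μ (E ∩ H)).toReal / (μ H).toReal

/-- The iterated conditional `(B|A)|(B|A)` is constant and equal to `1` (validating
Boethius' Thesis in Approach 2): with `x = P(B|A) ≠ 0` and `f = 1_{A∩B} + x·1_{Aᶜ}`
the indicator of `B|A`, if a real number `m` satisfies `∫ (f + m·(1 − f)) dμ = m`,
then `m = 1` and the random quantity `f + m·(1 − f)` is identically `1` on `Ω`. -/
theorem iterated_conditional_B_given_A_given_itself_eq_one
    {Ω : Type*} [MeasurableSpace Ω] (μ : Measure Ω) [IsProbabilityMeasure μ]
    (A B : Set Ω) (hA : MeasurableSet A) (hB : MeasurableSet B) (hApos : 0 < μ A)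
    (x : ℝ) (hx : x = condP μ B A) (hx0 : x ≠ 0)
    (f : Ω → ℝ)
    (hf : f = fun ω => (A ∩ B).indicator (1 : Ω → ℝ) ω + x * Aᶜ.indicator (1 : Ω → ℝ) ω)
    (m : ℝ) (hm : (∫ ω, (f ω + m * (1 - f ω)) ∂μ) = m) :
    m = 1 ∧ ∀ ω : Ω, f ω + m * (1 - f ω) = 1 := by
  set a : ℝ := (μ A).toReal with ha
  set b : ℝ := (μ (A ∩ B)).toReal with hb
  have hBA : μ (B ∩ A) = μ (A ∩ B) := by rw [Set.inter_comm]
  have hxval : x = b / a := by rw [hx, condP, hBA]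
  have hafin : μ A ≠ ⊤ := measure_ne_top μ A
  have hapos : 0 < a := ENNReal.toReal_pos hApos.ne' hafin
  -- integrability
  have hint1 : Integrable ((A ∩ B).indicator (1 : Ω → ℝ)) μ :=
    (integrable_const (1 : ℝ)).indicator (hA.inter hB)
  have hint2 : Integrable (Aᶜ.indicator (1 : Ω → ℝ)) μ :=
    (integrable_const (1 : ℝ)).indicator hA.compl
  have hintf : Integrable f μ := by
    rw [hf]; exact hint1.add (hint2.const_mul x)
  -- compute ∫ f
  have hI1 : ∫ ω, (A ∩ B).indicator (1 : Ω → ℝ) ω ∂μ = b := by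
    simpa [hb, measureReal_def, Pi.one_def] using integral_indicator_const (1 : ℝ) (hA.inter hB)
  have hI2 : ∫ ω, Aᶜ.indicator (1 : Ω → ℝ) ω ∂μ = 1 - a := by
    have := integral_indicator_const (1 : ℝ) (μ := μ) hA.compl
    simp only [smul_eq_mul, mul_one] at this
    rw [Pi.one_def, this, measureReal_def, prob_compl_eq_one_sub hA,
      ENNReal.toReal_sub_of_le prob_le_one ENNReal.one_ne_top]
    simp [ha]
  have hIf : ∫ ω, f ω ∂μ = b + x * (1 - a) := by
    rw [hf, integral_add hint1 (hint2.const_mul x), integral_const_mul, hI1, hI2]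
  have hIfx : ∫ ω, f ω ∂μ = x := by
    rw [hIf, hxval]; field_simp; ring
  -- split the hypothesis integral
  have hg : Integrable (fun ω => m * (1 - f ω)) μ :=
    ((integrable_const (1 : ℝ)).sub hintf).const_mul m
  rw [integral_add hintf hg, integral_const_mul,
    integral_sub (integrable_const 1) hintf, hIfx] at hm
  simp only [integral_const, measure_univ, probReal_univ, ENNReal.toReal_one, smul_eq_mul, one_mul] at hm
  have hm' : x + m * (1 - x) = m := hm
  have hm1 : m = 1 := by
    have : x * (1 - m) = 0 := by linarith
    rcases mul_eq_zero.mp this with h | h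
    · exact absurd h hx0
    · linarith
  exact ⟨hm1, fun ω => by rw [hm1]; ring⟩
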